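/- Let k be a number field with ring of integers 𝓞_k and let N be a positive integer. Suppose that for each ring embedding φ : k → ℂ an invertible matrix g_φ ∈ GL_N(ℂ) is given. Then the set of N×N matrices A with entries in 𝓞_k such that, for every embedding φ : k → ℂ, the matrix φ(A) (obtained by applying φ to each entry of A) belongs to g_φ · U_N(ℂ) · g_φ^{-1}, is finite. Here U_N(ℂ) denotes the group of N×N unitary matrices. -/

import Mathlib

open scoped MatrixGroups NumberField

/-- Let `k` be a number field with ring of integers `𝓞 k` and `N` a positive integer.
Suppose for each ring embedding `φ : k → ℂ` an invertible matrix `g φ ∈ GL_N(ℂ)` is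
given. Then the set of `N×N` matrices `A` with entries in `𝓞 k` such that for every
embedding `φ`, the matrix `φ(A)` (apply `φ` entrywise) lies in `g φ · U_N(ℂ) · (g φ)⁻¹`,
is finite. -/
theorem stmt_3 (k : Type*) [Field k] [NumberField k] (N : ℕ) (hN : 0 < N)
    (g : (k →+* ℂ) → GL (Fin N) ℂ) :
    {A : Matrix (Fin N) (Fin N) (𝓞 k) | ∀ φ : k →+* ℂ,
      ∃ U ∈ Matrix.unitaryGroup (Fin N) ℂ,
        A.map (fun x => φ (algebraMap (𝓞 k) k x)) =
          (g φ : Matrix (Fin N) (Fin N) ℂ) * U * (((g φ)⁻¹ : GL (Fin N) ℂ) :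
            Matrix (Fin N) (Fin N) ℂ)}.Finite := by
  classical
  -- For each embedding, a bound on the entries of `g φ * U * (g φ)⁻¹`
  set C : (k →+* ℂ) → ℝ := fun φ =>
    (∑ i : Fin N, ∑ a : Fin N, ‖(g φ : Matrix (Fin N) (Fin N) ℂ) i a‖) *
      (∑ b : Fin N, ∑ j : Fin N, ‖(((g φ)⁻¹ : GL (Fin N) ℂ) : Matrix (Fin N) (Fin N) ℂ) b j‖)
    with hC
  have hCnonneg : ∀ φ, 0 ≤ C φ := fun φ =>
    mul_nonneg (Finset.sum_nonneg fun _ _ => Finset.sum_nonneg fun _ _ => norm_nonneg _)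
      (Finset.sum_nonneg fun _ _ => Finset.sum_nonneg fun _ _ => norm_nonneg _)
  set B : ℝ := ∑ φ : (k →+* ℂ), C φ with hB
  have hCB : ∀ φ, C φ ≤ B := fun φ =>
    Finset.single_le_sum (fun ψ _ => hCnonneg ψ) (Finset.mem_univ φ)
  -- The finite set of algebraic integers with all embeddings bounded by `B`
  have hT : {x : k | IsIntegral ℤ x ∧ ∀ φ : k →+* ℂ, ‖φ x‖ ≤ B}.Finite :=
    NumberField.Embeddings.finite_of_norm_le k ℂ B
  set T' : Set (𝓞 k) :=
    (algebraMap (𝓞 k) k) ⁻¹' {x : k | IsIntegral ℤ x ∧ ∀ φ : k →+* ℂ, ‖φ x‖ ≤ B} with hT'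
  have hT'fin : T'.Finite :=
    hT.preimage (Set.injOn_of_injective (NumberField.RingOfIntegers.coe_injective (K := k)))
  -- matrices with entries in T' form a finite set
  have hpi : (Set.pi Set.univ fun _ : Fin N => Set.pi Set.univ fun _ : Fin N => T').Finite :=
    Set.Finite.pi fun _ => Set.Finite.pi fun _ => hT'fin
  refine hpi.subset ?_
  intro A hA
  simp only [Set.mem_pi, Set.mem_univ, forall_true_left]
  intro i j
  simp only [hT', Set.mem_preimage, Set.mem_setOf_eq]
  refine ⟨NumberField.RingOfIntegers.isIntegral_coe _, fun φ => ?_⟩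
  obtain ⟨U, hU, hAU⟩ := hA φ
  have hentry : φ (algebraMap (𝓞 k) k (A i j)) =
      ((g φ : Matrix (Fin N) (Fin N) ℂ) * U *
        (((g φ)⁻¹ : GL (Fin N) ℂ) : Matrix (Fin N) (Fin N) ℂ)) i j := by
    have := congrFun (congrFun hAU i) j
    exact this
  rw [hentry]
  have hmul : ((g φ : Matrix (Fin N) (Fin N) ℂ) * U *
      (((g φ)⁻¹ : GL (Fin N) ℂ) : Matrix (Fin N) (Fin N) ℂ)) i j =
      ∑ b : Fin N, ∑ a : Fin N, (g φ : Matrix (Fin N) (Fin N) ℂ) i a * U a b *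
        (((g φ)⁻¹ : GL (Fin N) ℂ) : Matrix (Fin N) (Fin N) ℂ) b j := by
    simp [Matrix.mul_apply, Finset.sum_mul]
  rw [hmul]
  calc ‖∑ b : Fin N, ∑ a : Fin N, (g φ : Matrix (Fin N) (Fin N) ℂ) i a * U a b *
        (((g φ)⁻¹ : GL (Fin N) ℂ) : Matrix (Fin N) (Fin N) ℂ) b j‖
      ≤ ∑ b : Fin N, ∑ a : Fin N, ‖(g φ : Matrix (Fin N) (Fin N) ℂ) i a * U a b *
        (((g φ)⁻¹ : GL (Fin N) ℂ) : Matrix (Fin N) (Fin N) ℂ) b j‖ := by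
        refine (norm_sum_le _ _).trans (Finset.sum_le_sum fun b _ => norm_sum_le _ _)
    _ ≤ ∑ b : Fin N, ∑ a : Fin N, ‖(g φ : Matrix (Fin N) (Fin N) ℂ) i a‖ *
        ‖(((g φ)⁻¹ : GL (Fin N) ℂ) : Matrix (Fin N) (Fin N) ℂ) b j‖ := by
        refine Finset.sum_le_sum fun b _ => Finset.sum_le_sum fun a _ => ?_
        rw [norm_mul, norm_mul]
        have h1 : ‖U a b‖ ≤ 1 := entry_norm_bound_of_unitary hU a b
        calc ‖(g φ : Matrix (Fin N) (Fin N) ℂ) i a‖ * ‖U a b‖ *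
              ‖(((g φ)⁻¹ : GL (Fin N) ℂ) : Matrix (Fin N) (Fin N) ℂ) b j‖
            ≤ ‖(g φ : Matrix (Fin N) (Fin N) ℂ) i a‖ * 1 *
              ‖(((g φ)⁻¹ : GL (Fin N) ℂ) : Matrix (Fin N) (Fin N) ℂ) b j‖ := by
              gcongr
          _ = _ := by ring
    _ = (∑ a : Fin N, ‖(g φ : Matrix (Fin N) (Fin N) ℂ) i a‖) *
        (∑ b : Fin N, ‖(((g φ)⁻¹ : GL (Fin N) ℂ) : Matrix (Fin N) (Fin N) ℂ) b j‖) := by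
        rw [Finset.sum_mul_sum, Finset.sum_comm]
    _ ≤ C φ := by
        rw [hC]
        refine mul_le_mul ?_ ?_ (Finset.sum_nonneg fun _ _ => norm_nonneg _)
          (Finset.sum_nonneg fun _ _ => Finset.sum_nonneg fun _ _ => norm_nonneg _)
        · exact Finset.single_le_sum
            (fun _ _ => Finset.sum_nonneg fun _ _ => norm_nonneg _) (Finset.mem_univ i)
        · exact Finset.sum_le_sum fun b _ =>
            Finset.single_le_sum (fun _ _ => norm_nonneg _) (Finset.mem_univ j)
    _ ≤ B := hCB φ
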